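/- arXiv:2208.00989 — 3 statements merged into one kernel-verified Lean document; each statement's English description precedes it below -/
import Mathlib

section
/- In the m-truncated t-free Fock space, the creation and annihilation operators satisfy a_i a_j^† = δ_{ij}(P_Ω + t·Σ_{h=1}^{m-1} P_h), where P_h is the orthogonal projection onto the h-particle subspace and P_Ω onto the vacuum. -/
noncomputable section

/-- Words of length at most `m`: basis indexing the `m`-truncated Fock space over `ℓ²(ℤ)`. -/
abbrev TWord (m : ℕ) := {w : List ℤ // w.length ≤ m}

/-- The `m`-truncated `t`-free Fock space (as a vector space, spanned by the basis of words
of length at most `m`; the word `[i₁, …, iₖ]` stands for `e_{i₁} ⊗ ⋯ ⊗ e_{iₖ}`, and `[]`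
for the vacuum `Ω`). -/
abbrev TFock (m : ℕ) := TWord m →₀ ℂ

/-- The truncated creation operator `a_i^†`. -/
noncomputable def cre (m : ℕ) (i : ℤ) : TFock m →ₗ[ℂ] TFock m :=
  Finsupp.lift (TFock m) ℂ (TWord m) (fun w =>
    if h : w.val.length + 1 ≤ m then
      Finsupp.single ⟨i :: w.val, by simpa using h⟩ 1
    else 0)

/-- The truncated annihilation operator `a_i`. -/
noncomputable def ann (m : ℕ) (t : ℝ) (i : ℤ) : TFock m →ₗ[ℂ] TFock m :=
  Finsupp.lift (TFock m) ℂ (TWord m) (fun w =>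
    match w with
    | ⟨[], _⟩ => 0
    | ⟨j :: w', hw⟩ =>
        if j = i then (if w' = [] then (1 : ℂ) else (t : ℂ)) •
          Finsupp.single (⟨w', by simpa using Nat.le_of_succ_le hw⟩ : TWord m) 1
        else 0)

/-- The orthogonal projection `P_h` onto the `h`-particle subspace. -/
noncomputable def lvl (m : ℕ) (h : ℕ) : TFock m →ₗ[ℂ] TFock m :=
  Finsupp.lift (TFock m) ℂ (TWord m) (fun w =>
    if w.val.length = h then Finsupp.single w 1 else 0)

/-- In the `m`-truncated `t`-free Fock space,
`a_i a_j^† = δ_{ij} (P_Ω + t·Σ_{h=1}^{m−1} P_h)`. -/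
theorem stmt8 (t : ℝ) (ht : 0 < t) (m : ℕ) (hm : 1 ≤ m) (i j : ℤ) :
    (ann m t i) ∘ₗ (cre m j) =
      (if i = j then (1 : ℂ) else 0) •
        (lvl m 0 + (t : ℂ) • ∑ h ∈ Finset.Icc 1 (m - 1), lvl m h) := by
  apply Finsupp.lhom_ext'
  rintro ⟨w, hw⟩
  apply LinearMap.ext_ring
  simp only [LinearMap.comp_apply, Finsupp.lsingle_apply, cre, ann, lvl, Finsupp.lift_apply,
    Finsupp.sum_single_index, zero_smul, one_smul, LinearMap.smul_apply, LinearMap.add_apply,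
    LinearMap.sum_apply]
  have hsum : (∑ d ∈ Finset.Icc 1 (m - 1),
      (if w.length = d then (Finsupp.single (⟨w, hw⟩ : TWord m) 1 : TFock m) else 0)) =
      if w.length ∈ Finset.Icc 1 (m - 1) then Finsupp.single (⟨w, hw⟩ : TWord m) 1 else 0 := by
    rw [Finset.sum_ite_eq]
  rw [hsum]
  by_cases hl : w.length + 1 ≤ m
  · rw [dif_pos hl, Finsupp.sum_single_index (by simp)]
    by_cases hij : i = j
    · subst hij
      simp only [if_pos rfl, one_smul]
      rcases w with _ | ⟨a, w'⟩
      · simp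
      · have h1 : (1:ℕ) ≤ (a :: w').length := by simp
        have h2 : (a :: w').length ≤ m - 1 := by omega
        simp [Finset.mem_Icc, h1, h2, show w'.length + 1 ≤ m - 1 from by simpa using h2]
    · have : ¬ j = i := fun h => hij h.symm
      simp [this, hij]
  · rw [dif_neg hl]
    have hlm : w.length = m := by omega
    have : ¬ w.length ∈ Finset.Icc 1 (m-1) := by simp [Finset.mem_Icc]; omega
    have h0 : ¬ w.length = 0 := by omega
    simp [this, h0, Finsupp.sum_zero_index]
end
end

section
/- Let A be a unital C*-algebra and Φ a *-automorphism of A such that for every a in a dense *-subalgebra, the Cesàro averages (1/n)Σ_{k=0}^{n-1}Φ^k(a) converge in norm. Then the limit map E(a) = lim_n (1/n)Σ_{k<n}Φ^k(a) extends to a norm-one projection (conditional expectation) from A onto the fixed-point subalgebra A^Φ = {a : Φ(a) = a}. -/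
open Filter Topology

/-- If `A` is a unital C*-algebra and `Φ` a *-automorphism such that the Cesàro averages
`(1/n)Σ_{k<n} Φ^k(a)` converge in norm for every `a` in a dense *-subalgebra, then the
limit map extends to a norm-one projection (conditional expectation) from `A` onto the
fixed-point subalgebra `A^Φ`. -/
theorem stmt12 {A : Type*} [NormedRing A] [StarRing A] [CStarRing A] [NormedAlgebra ℂ A]
    [CompleteSpace A] [StarModule ℂ A] [Nontrivial A]
    (Φ : A ≃⋆ₐ[ℂ] A) (B : StarSubalgebra ℂ A) (hB : Dense (B : Set A))
    (hconv : ∀ a ∈ B, ∃ x : A,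
      Tendsto (fun n : ℕ => (n : ℂ)⁻¹ • ∑ k ∈ Finset.range n, (⇑Φ)^[k] a)
        atTop (𝓝 x)) :
    ∃ E : A →L[ℂ] A, ‖E‖ = 1 ∧
      (∀ a : A, Tendsto (fun n : ℕ => (n : ℂ)⁻¹ • ∑ k ∈ Finset.range n, (⇑Φ)^[k] a)
        atTop (𝓝 (E a))) ∧
      (∀ a : A, Φ (E a) = E a) ∧
      (∀ a : A, Φ a = a → E a = a) := by
  letI : CStarAlgebra A := {}
  set T : ℕ → A → A := fun n a => (n : ℂ)⁻¹ • ∑ k ∈ Finset.range n, (⇑Φ)^[k] a with hT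
  have hiter : ∀ (k : ℕ) (a : A), ‖(⇑Φ)^[k] a‖ = ‖a‖ := by
    intro k a
    induction k with
    | zero => simp
    | succ k ih => rw [Function.iterate_succ_apply', StarAlgEquiv.norm_map, ih]
  have hTsub : ∀ (n : ℕ) (a b : A), T n a - T n b = T n (a - b) := by
    intro n a b
    simp only [hT, ← smul_sub, ← Finset.sum_sub_distrib]
    congr 1
    refine Finset.sum_congr rfl fun k _ => ?_
    induction k with
    | zero => simp
    | succ k ih => simp [Function.iterate_succ_apply', ih, map_sub]
  have hTnorm : ∀ (n : ℕ) (a : A), ‖T n a‖ ≤ ‖a‖ := by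
    intro n a
    rcases Nat.eq_zero_or_pos n with h | h
    · simp [hT, h]
    · have hsum : ‖∑ k ∈ Finset.range n, (⇑Φ)^[k] a‖ ≤ n * ‖a‖ := by
        calc ‖∑ k ∈ Finset.range n, (⇑Φ)^[k] a‖
            ≤ ∑ k ∈ Finset.range n, ‖(⇑Φ)^[k] a‖ := norm_sum_le _ _
          _ = n * ‖a‖ := by simp [hiter]
      have hn : (0:ℝ) < (n:ℝ) := by exact_mod_cast h
      calc ‖T n a‖ = ‖(n:ℂ)⁻¹‖ * ‖∑ k ∈ Finset.range n, (⇑Φ)^[k] a‖ := norm_smul _ _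
        _ ≤ (n:ℝ)⁻¹ * (n * ‖a‖) := by
            apply mul_le_mul _ hsum (norm_nonneg _) (by positivity)
            simp
        _ = ‖a‖ := by field_simp
  have hcauchy : ∀ a : A, CauchySeq fun n => T n a := by
    intro a
    rw [Metric.cauchySeq_iff]
    intro ε hε
    obtain ⟨b, hball, hbB⟩ := Metric.dense_iff.mp hB a (ε/3) (by linarith)
    rw [Metric.mem_ball, dist_comm, dist_eq_norm] at hball
    have hab := hball
    obtain ⟨x, hx⟩ := hconv b hbB
    have hcb : CauchySeq fun n => T n b := hx.cauchySeq
    obtain ⟨N, hN⟩ := Metric.cauchySeq_iff.mp hcb (ε/3) (by linarith)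
    refine ⟨N, fun m hm n hn => ?_⟩
    have key : T m a - T n a = T m (a - b) + (T m b - T n b) + T n (b - a) := by
      rw [← hTsub, ← hTsub]; abel
    rw [dist_eq_norm, key]
    calc ‖T m (a - b) + (T m b - T n b) + T n (b - a)‖
        ≤ ‖T m (a - b) + (T m b - T n b)‖ + ‖T n (b - a)‖ := norm_add_le _ _
      _ ≤ ‖T m (a - b)‖ + ‖T m b - T n b‖ + ‖T n (b - a)‖ := by
          gcongr; exact norm_add_le _ _
      _ < ε/3 + ε/3 + ε/3 := by
          have h1 : ‖T m (a - b)‖ ≤ ‖a - b‖ := hTnorm _ _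
          have h2 : ‖T n (b - a)‖ ≤ ‖b - a‖ := hTnorm _ _
          have h3 : ‖T m b - T n b‖ < ε/3 := by
            have := hN m hm n hn; rwa [dist_eq_norm] at this
          rw [norm_sub_rev] at h2
          have := hab
          gcongr <;> linarith
      _ = ε := by ring
  have hlim : ∀ a : A, ∃ x : A, Tendsto (fun n => T n a) atTop (𝓝 x) := fun a =>
    cauchySeq_tendsto_of_complete (hcauchy a)
  choose g hg using hlim
  have hadd : ∀ a b : A, g (a + b) = g a + g b := by
    intro a b
    refine tendsto_nhds_unique (hg (a + b)) ?_
    have : (fun n => T n (a + b)) = fun n => T n a + T n b := by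
      funext n
      simp only [hT, ← smul_add, ← Finset.sum_add_distrib]
      congr 1
      refine Finset.sum_congr rfl fun k _ => ?_
      induction k with
      | zero => simp
      | succ k ih => simp [Function.iterate_succ_apply', ih, map_add]
    rw [this]
    exact (hg a).add (hg b)
  have hsmul : ∀ (c : ℂ) (a : A), g (c • a) = c • g a := by
    intro c a
    refine tendsto_nhds_unique (hg (c • a)) ?_
    have : (fun n => T n (c • a)) = fun n => c • T n a := by
      funext n
      have hs : ∀ k : ℕ, (⇑Φ)^[k] (c • a) = c • (⇑Φ)^[k] a := by
        intro k
        induction k with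
        | zero => simp
        | succ k ih => simp [Function.iterate_succ_apply', ih, map_smul]
      simp only [hT, hs, ← Finset.smul_sum]
      rw [smul_comm]
    rw [this]
    exact (hg a).const_smul c
  have hgnorm : ∀ a : A, ‖g a‖ ≤ ‖a‖ :=
    fun a => le_of_tendsto (hg a).norm (Eventually.of_forall fun n => hTnorm n a)
  set E0 : A →ₗ[ℂ] A :=
    { toFun := g, map_add' := hadd, map_smul' := hsmul } with hE0
  set E : A →L[ℂ] A := E0.mkContinuous 1 (fun a => by rw [one_mul]; exact hgnorm a) with hE
  have hEa : ∀ a : A, E a = g a := fun a => rfl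
  have hfix : ∀ a : A, Φ a = a → g a = a := by
    intro a ha
    refine tendsto_nhds_unique (hg a) ?_
    have hev : ∀ᶠ n in atTop, T n a = a := by
      filter_upwards [eventually_ge_atTop 1] with n hn
      have hn0 : (n:ℂ) ≠ 0 := by exact_mod_cast Nat.one_le_iff_ne_zero.mp hn
      simp only [hT]
      rw [Finset.sum_congr rfl fun k _ => Function.iterate_fixed ha k,
        Finset.sum_const, Finset.card_range, ← Nat.cast_smul_eq_nsmul ℂ,
        smul_smul, inv_mul_cancel₀ hn0, one_smul]
    exact tendsto_const_nhds.congr' (hev.mono fun n h => h.symm)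
  have hg1 : g (1:A) = 1 := hfix 1 (map_one Φ)
  have hΦfix : ∀ a : A, Φ (g a) = g a := by
    intro a
    have hdiff : ∀ n : ℕ, Φ (T n a) - T n a = (n:ℂ)⁻¹ • ((⇑Φ)^[n] a - a) := by
      intro n
      have hsum : ∑ k ∈ Finset.range n, (⇑Φ)^[k+1] a
          = ∑ k ∈ Finset.range n, (⇑Φ)^[k] a + ((⇑Φ)^[n] a - a) := by
        have h1 := Finset.sum_range_succ (fun k => (⇑Φ)^[k] a) n
        have h2 := Finset.sum_range_succ' (fun k => (⇑Φ)^[k] a) n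
        simp only [Function.iterate_zero_apply] at h2
        rw [h1] at h2
        have h3 := eq_sub_of_add_eq h2.symm
        rw [h3]; abel
      have hmap : Φ (T n a) = (n:ℂ)⁻¹ • ∑ k ∈ Finset.range n, (⇑Φ)^[k+1] a := by
        simp only [hT, map_smul, map_sum]
        congr 1
        exact Finset.sum_congr rfl fun k _ => (Function.iterate_succ_apply' Φ k a).symm
      rw [hmap, hsum, smul_add]
      simp [hT]
    have h0 : Tendsto (fun n : ℕ => (n:ℂ)⁻¹ • ((⇑Φ)^[n] a - a)) atTop (𝓝 0) := by
      apply squeeze_zero_norm (a := fun n : ℕ => (n:ℝ)⁻¹ * (2 * ‖a‖))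
      · intro n
        rw [norm_smul]
        have : ‖(⇑Φ)^[n] a - a‖ ≤ 2 * ‖a‖ := by
          calc ‖(⇑Φ)^[n] a - a‖ ≤ ‖(⇑Φ)^[n] a‖ + ‖a‖ := norm_sub_le _ _
            _ = 2 * ‖a‖ := by rw [hiter]; ring
        have hc : ‖(n:ℂ)⁻¹‖ = (n:ℝ)⁻¹ := by simp
        rw [hc]
        exact mul_le_mul_of_nonneg_left this (by positivity)
      · have : Tendsto (fun n : ℕ => (n:ℝ)⁻¹) atTop (𝓝 0) :=
          tendsto_inv_atTop_zero.comp tendsto_natCast_atTop_atTop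
        simpa using this.mul_const (2 * ‖a‖)
    have h1 : Tendsto (fun n => Φ (T n a)) atTop (𝓝 (g a)) := by
      have := (hg a).add h0
      rw [add_zero] at this
      refine this.congr fun n => ?_
      have h' := hdiff n
      rw [sub_eq_iff_eq_add] at h'
      rw [h', add_comm]
    have h2 : Tendsto (fun n => Φ (T n a)) atTop (𝓝 (Φ (g a))) :=
      ((StarAlgEquiv.isometry Φ).continuous.tendsto _).comp (hg a)
    exact tendsto_nhds_unique h2 h1
  refine ⟨E, ?_, fun a => by rw [hEa]; exact hg a, fun a => by rw [hEa]; exact hΦfix a,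
    fun a ha => by rw [hEa]; exact hfix a ha⟩
  refine le_antisymm (LinearMap.mkContinuous_norm_le E0 zero_le_one _) ?_
  have h1 := E.le_opNorm 1
  rw [hEa, hg1] at h1
  simpa using h1
end

section
/- Let (A, Φ) be a C*-dynamical system that is uniquely ergodic with respect to the fixed-point algebra, i.e., E(a) := lim_n (1/n)Σ_{k<n}Φ^k(a) exists in norm for all a ∈ A. Then the restriction map ω ↦ ω∘ι from Φ-invariant states of A to states of A^Φ is an affine bijection, with inverse φ ↦ φ∘E. -/
open Filter Topology ComplexConjugate

/-- The fixed-point subalgebra `A^Φ` of a *-automorphism `Φ`. -/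
def fixedPts {A : Type*} [NormedRing A] [StarRing A] [NormedAlgebra ℂ A] [StarModule ℂ A]
    (Φ : A ≃⋆ₐ[ℂ] A) : StarSubalgebra ℂ A where
  carrier := {a | Φ a = a}
  mul_mem' {x y} hx hy := by
    simp only [Set.mem_setOf_eq] at *
    rw [map_mul, hx, hy]
  add_mem' {x y} hx hy := by
    simp only [Set.mem_setOf_eq] at *
    rw [map_add, hx, hy]
  algebraMap_mem' c := by
    simp only [Set.mem_setOf_eq, Algebra.algebraMap_eq_smul_one, map_smul, map_one]
  star_mem' {x} hx := by
    simp only [Set.mem_setOf_eq] at *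
    rw [map_star, hx]

/-- A state on a unital complex *-algebra: a linear, unital, positive functional. -/
def IsState {B : Type*} [Ring B] [StarRing B] [Algebra ℂ B] (φ : B → ℂ) : Prop :=
  (∀ x y : B, φ (x + y) = φ x + φ y) ∧
  (∀ (c : ℂ) (x : B), φ (c • x) = c * φ x) ∧
  φ 1 = 1 ∧
  ∀ x : B, 0 ≤ (φ (star x * x)).re ∧ (φ (star x * x)).im = 0

section StateLemmas

set_option linter.unusedSectionVars false

variable {B : Type*} [Ring B] [StarRing B] [Algebra ℂ B] [StarModule ℂ B] {φ : B → ℂ}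

/-- Bundle a state as a linear map. -/
noncomputable def IsState.lin (h : IsState φ) : B →ₗ[ℂ] ℂ where
  toFun := φ
  map_add' := h.1
  map_smul' c x := by simpa using h.2.1 c x

@[simp] lemma IsState.lin_apply (h : IsState φ) (x : B) : h.lin x = φ x := rfl

lemma IsState.map_star (h : IsState φ) (x : B) : φ (star x) = conj (φ x) := by
  have e1 : ∀ y : B, (φ (star y * y)).im = 0 := fun y => (h.2.2.2 y).2
  have k1 := e1 (x + 1)
  have k2 := e1 (x + Complex.I • 1)
  have ex1 : star (x + 1) * (x + 1) = star x * x + (star x + x) + 1 := by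
    simp [star_add, add_mul, mul_add]; abel
  have ex2 : star (x + Complex.I • 1) * (x + Complex.I • 1)
      = star x * x + (Complex.I • star x - Complex.I • x) + 1 := by
    have hst : star (x + Complex.I • (1:B)) = star x - Complex.I • 1 := by
      rw [star_add, star_smul, star_one, Complex.star_def, Complex.conj_I, neg_smul,
        sub_eq_add_neg]
    rw [hst, sub_mul, mul_add, mul_add]
    simp only [smul_mul_assoc, mul_smul_comm, one_mul, mul_one, smul_smul, Complex.I_mul_I,
      neg_one_smul]
    abel
  rw [ex1] at k1; rw [ex2] at k2
  have l1 : φ (star x * x + (star x + x) + 1) = φ (star x * x) + (φ (star x) + φ x) + 1 := by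
    rw [h.1, h.1, h.1, h.2.2.1]
  have l2 : φ (star x * x + (Complex.I • star x - Complex.I • x) + 1)
      = φ (star x * x) + Complex.I * (φ (star x) - φ x) + 1 := by
    have e : φ (Complex.I • star x - Complex.I • x)
        = Complex.I * (φ (star x) - φ x) := by
      have := map_sub h.lin (Complex.I • star x) (Complex.I • x)
      simp only [IsState.lin_apply] at this
      rw [this, h.2.1, h.2.1]; ring
    rw [h.1, h.1, e, h.2.2.1]
  rw [l1] at k1; rw [l2] at k2
  have him := e1 x
  apply Complex.ext
  · simp only [Complex.add_im, Complex.mul_im, Complex.sub_re, Complex.sub_im, Complex.I_re,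
      Complex.I_im, Complex.one_im, him] at k2
    simp only [Complex.conj_re]
    linarith
  · simp only [Complex.add_im, Complex.one_im, him] at k1
    simp only [Complex.conj_im]
    linarith

lemma IsState.map_zero' (h : IsState φ) : φ 0 = 0 := map_zero h.lin

lemma IsState.re_nonneg_of_mem (h : IsState φ) (p : B)
    (hp : p ∈ AddSubmonoid.closure (Set.range fun s : B => star s * s)) :
    0 ≤ (φ p).re ∧ (φ p).im = 0 := by
  induction hp using AddSubmonoid.closure_induction with
  | mem x hx => obtain ⟨s, rfl⟩ := hx; exact h.2.2.2 s
  | zero => simp [h.map_zero']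
  | add x y _ _ hx hy =>
    rw [h.1]
    exact ⟨by simpa using add_nonneg hx.1 hy.1, by simp [hx.2, hy.2]⟩

end StateLemmas

section StateBound

set_option linter.unusedSectionVars false

variable {B : Type*} [NormedRing B] [StarRing B] [CStarRing B] [NormedAlgebra ℂ B]
    [CompleteSpace B] [StarModule ℂ B] {φ : B → ℂ}

lemma IsState.re_sms_le (h : IsState φ) (x : B) :
    (φ (star x * x)).re ≤ ‖x‖ * ‖x‖ := by
  letI : CStarAlgebra B := ⟨⟩
  letI := CStarAlgebra.spectralOrder B
  haveI := CStarAlgebra.spectralOrderedRing B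
  set c := ‖star x * x‖ with hc
  have h1 : star x * x ≤ algebraMap ℝ B c :=
    IsSelfAdjoint.le_algebraMap_norm_self (IsSelfAdjoint.star_mul_self x)
  have h2 := (h.re_nonneg_of_mem _ (StarOrderedRing.nonneg_iff.mp (sub_nonneg.mpr h1))).1
  have h3 : φ (algebraMap ℝ B c - star x * x) = (c : ℂ) - φ (star x * x) := by
    have e : algebraMap ℝ B c = (c : ℂ) • (1:B) := by
      rw [Algebra.algebraMap_eq_smul_one]; norm_num [Complex.coe_smul]
    have := map_sub h.lin (algebraMap ℝ B c) (star x * x)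
    simp only [IsState.lin_apply] at this
    rw [this, e, h.2.1, h.2.2.1, mul_one]
  rw [h3] at h2
  simp only [Complex.sub_re, Complex.ofReal_re, sub_nonneg] at h2
  calc (φ (star x * x)).re ≤ c := h2
    _ = ‖x‖ * ‖x‖ := CStarRing.norm_star_mul_self

lemma IsState.normSq_le (h : IsState φ) (x : B) :
    Complex.normSq (φ x) ≤ (φ (star x * x)).re := by
  set u := φ x with hu
  have ex : star (x - u • 1) * (x - u • 1)
      = star x * x - u • star x - conj u • x + (u * conj u) • 1 := by
    have hst : star (x - u • (1:B)) = star x - conj u • 1 := by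
      rw [star_sub, star_smul, star_one]; rfl
    rw [hst, sub_mul, mul_sub, mul_sub]
    simp only [smul_mul_assoc, mul_smul_comm, one_mul, mul_one, smul_smul]
    abel
  have hpos := (h.2.2.2 (x - u • 1)).1
  rw [ex] at hpos
  have e : φ (star x * x - u • star x - conj u • x + (u * conj u) • 1)
      = φ (star x * x) - (u * conj u : ℂ) := by
    have := map_add h.lin (star x * x - u • star x - conj u • x) ((u * conj u) • 1)
    have h2 := map_sub h.lin (star x * x - u • star x) (conj u • x)
    have h3 := map_sub h.lin (star x * x) (u • star x)
    simp only [IsState.lin_apply] at this h2 h3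
    rw [this, h2, h3, h.2.1, h.2.1, h.2.1, h.map_star, h.2.2.1, mul_one]
    ring
  rw [e, Complex.mul_conj] at hpos
  simpa [sub_nonneg] using hpos

lemma IsState.norm_le (h : IsState φ) (x : B) : ‖φ x‖ ≤ ‖x‖ := by
  have h1 := (h.normSq_le x).trans (h.re_sms_le x)
  rw [Complex.norm_def]
  calc Real.sqrt (Complex.normSq (φ x)) ≤ Real.sqrt (‖x‖ * ‖x‖) := Real.sqrt_le_sqrt h1
    _ = ‖x‖ := Real.sqrt_mul_self (norm_nonneg x)

lemma IsState.continuous (h : IsState φ) : Continuous φ := by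
  have : Continuous ⇑(h.lin.mkContinuous 1 (fun x => by simpa using h.norm_le x)) :=
    (h.lin.mkContinuous 1 _).continuous
  exact this

end StateBound

section IterLemmas

set_option linter.unusedSectionVars false

variable {A : Type*} [NormedRing A] [StarRing A] [CStarRing A] [NormedAlgebra ℂ A]
    [CompleteSpace A] [StarModule ℂ A] (Φ : A ≃⋆ₐ[ℂ] A)

lemma iter_add (k : ℕ) (a b : A) : (⇑Φ)^[k] (a + b) = (⇑Φ)^[k] a + (⇑Φ)^[k] b := by
  induction k generalizing a b with
  | zero => simp
  | succ n ih => simp [Function.iterate_succ_apply, map_add, ih]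

lemma iter_smul (k : ℕ) (c : ℂ) (a : A) : (⇑Φ)^[k] (c • a) = c • (⇑Φ)^[k] a := by
  induction k generalizing a with
  | zero => simp
  | succ n ih => simp [Function.iterate_succ_apply, map_smul, ih]

lemma iter_star (k : ℕ) (a : A) : (⇑Φ)^[k] (star a) = star ((⇑Φ)^[k] a) := by
  induction k generalizing a with
  | zero => simp
  | succ n ih => simp [Function.iterate_succ_apply, map_star, ih]

lemma iter_mul (k : ℕ) (a b : A) : (⇑Φ)^[k] (a * b) = (⇑Φ)^[k] a * (⇑Φ)^[k] b := by
  induction k generalizing a b with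
  | zero => simp
  | succ n ih => simp [Function.iterate_succ_apply, map_mul, ih]

lemma iter_fixed (k : ℕ) {a : A} (ha : Φ a = a) : (⇑Φ)^[k] a = a := by
  induction k with
  | zero => simp
  | succ n ih => simp [Function.iterate_succ_apply', ih, ha]

lemma iter_norm (k : ℕ) (a : A) : ‖(⇑Φ)^[k] a‖ = ‖a‖ := by
  letI : CStarAlgebra A := ⟨⟩
  induction k generalizing a with
  | zero => simp
  | succ n ih =>
    rw [Function.iterate_succ_apply', NonUnitalStarAlgHom.norm_map Φ Φ.injective, ih]

variable {E : A → A}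
  (hE : ∀ a : A, Filter.Tendsto (fun n : ℕ => (n : ℂ)⁻¹ • ∑ k ∈ Finset.range n, (⇑Φ)^[k] a)
      atTop (𝓝 (E a)))
include Φ hE

lemma E_add (a b : A) : E (a + b) = E a + E b := by
  refine tendsto_nhds_unique (hE (a + b)) ?_
  have := (hE a).add (hE b)
  refine this.congr fun n => ?_
  simp [iter_add, Finset.sum_add_distrib, smul_add]

lemma E_smul (c : ℂ) (a : A) : E (c • a) = c • E a := by
  refine tendsto_nhds_unique (hE (c • a)) ?_
  refine ((hE a).const_smul c).congr fun n => ?_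
  simp only [iter_smul, ← Finset.smul_sum, smul_smul]
  rw [mul_comm]

lemma E_star (a : A) : E (star a) = star (E a) := by
  refine tendsto_nhds_unique (hE (star a)) ?_
  refine ((hE a).star).congr fun n => ?_
  simp only [iter_star, ← star_sum, star_smul]
  congr 1
  simp [Complex.star_def, map_inv₀]

lemma E_fixed {a : A} (ha : Φ a = a) : E a = a := by
  refine tendsto_nhds_unique (hE a) ?_
  refine Tendsto.congr' ?_ (tendsto_const_nhds : Filter.Tendsto (fun _ : ℕ => a) atTop (𝓝 a))
  filter_upwards [Filter.eventually_ge_atTop 1] with n hn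
  have hn' : (n : ℂ) ≠ 0 := by exact_mod_cast Nat.one_le_iff_ne_zero.mp hn
  simp only [iter_fixed Φ _ ha, Finset.sum_const, Finset.card_range]
  rw [← Nat.cast_smul_eq_nsmul ℂ n a, smul_smul, inv_mul_cancel₀ hn', one_smul]

lemma E_one : E 1 = 1 := E_fixed Φ hE (map_one Φ)

lemma E_phi (a : A) : E (Φ a) = E a := by
  refine tendsto_nhds_unique (hE (Φ a)) ?_
  have key : ∀ n : ℕ, (n : ℂ)⁻¹ • ∑ k ∈ Finset.range n, (⇑Φ)^[k] (Φ a)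
      = ((n : ℂ)⁻¹ • ∑ k ∈ Finset.range n, (⇑Φ)^[k] a) + (n : ℂ)⁻¹ • ((⇑Φ)^[n] a - a) := by
    intro n
    have h1 : ∑ k ∈ Finset.range n, (⇑Φ)^[k] (Φ a)
        = ∑ k ∈ Finset.range n, (⇑Φ)^[k + 1] a := by
      refine Finset.sum_congr rfl fun k _ => ?_
      rw [← Function.iterate_succ_apply]
    have h2 : ∑ k ∈ Finset.range (n + 1), (⇑Φ)^[k] a
        = (∑ k ∈ Finset.range n, (⇑Φ)^[k + 1] a) + a := by
      simpa using Finset.sum_range_succ' (fun k => (⇑Φ)^[k] a) n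
    have h3 : ∑ k ∈ Finset.range (n + 1), (⇑Φ)^[k] a
        = (∑ k ∈ Finset.range n, (⇑Φ)^[k] a) + (⇑Φ)^[n] a := Finset.sum_range_succ _ n
    have h4 : ∑ k ∈ Finset.range n, (⇑Φ)^[k] (Φ a)
        = (∑ k ∈ Finset.range n, (⇑Φ)^[k] a) + ((⇑Φ)^[n] a - a) := by
      rw [h1]
      have := h2.symm.trans h3
      rw [← sub_eq_iff_eq_add] at this
      rw [← this]; abel
    rw [h4, smul_add]
  have hsmall : Filter.Tendsto (fun n : ℕ => (n : ℂ)⁻¹ • ((⇑Φ)^[n] a - a)) atTop (𝓝 0) := by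
    refine squeeze_zero_norm (fun n => ?_) (tendsto_const_div_atTop_nhds_zero_nat (2 * ‖a‖))
    rcases Nat.eq_zero_or_pos n with rfl | hn
    · simp
    · rw [norm_smul]
      have h1 : ‖((n : ℂ))⁻¹‖ = (n : ℝ)⁻¹ := by simp
      rw [h1, div_eq_inv_mul]
      gcongr
      calc ‖(⇑Φ)^[n] a - a‖ ≤ ‖(⇑Φ)^[n] a‖ + ‖a‖ := norm_sub_le _ _
        _ = 2 * ‖a‖ := by rw [iter_norm]; ring
  have := (hE a).add hsmall
  rw [add_zero] at this
  exact this.congr fun n => (key n).symm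

end IterLemmas

lemma norm_sub_star_mul_self_le {A : Type*} [NormedRing A] [StarRing A] [CStarRing A]
    [NormedAlgebra ℂ A] [CompleteSpace A] [StarModule ℂ A] (c : ℝ) (z : A)
    (hz : ‖z‖ * ‖z‖ ≤ c) : ‖(c : ℂ) • (1 : A) - star z * z‖ ≤ c := by
  rcases subsingleton_or_nontrivial A with hsub | hnt
  · have hc : 0 ≤ c := le_trans (mul_self_nonneg ‖z‖) hz
    rw [Subsingleton.elim ((c : ℂ) • (1 : A) - star z * z) 0, norm_zero]
    exact hc
  letI : CStarAlgebra A := ⟨⟩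
  letI := CStarAlgebra.spectralOrder A
  haveI := CStarAlgebra.spectralOrderedRing A
  have hc : 0 ≤ c := le_trans (mul_self_nonneg ‖z‖) hz
  have e : (c : ℂ) • (1 : A) = algebraMap ℝ A c := by
    rw [Algebra.algebraMap_eq_smul_one]; norm_num [Complex.coe_smul]
  have h1 : star z * z ≤ algebraMap ℝ A c := by
    refine le_algebraMap_of_spectrum_le (fun x hx => ?_) (IsSelfAdjoint.star_mul_self z)
    calc x ≤ ‖x‖ := Real.le_norm_self x
      _ ≤ ‖star z * z‖ := spectrum.norm_le_norm_of_mem hx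
      _ = ‖z‖ * ‖z‖ := CStarRing.norm_star_mul_self
      _ ≤ c := hz
  have h2 : (0 : A) ≤ algebraMap ℝ A c - star z * z := sub_nonneg.mpr h1
  have h3 : algebraMap ℝ A c - star z * z ≤ algebraMap ℝ A c :=
    sub_le_self _ (star_mul_self_nonneg z)
  have h4 := CStarAlgebra.norm_le_norm_of_nonneg_of_le h2 h3
  have hone : ‖(1 : A)‖ ≤ 1 := by
    have h := CStarRing.norm_star_mul_self (x := (1 : A))
    rw [star_one, one_mul] at h
    nlinarith [norm_nonneg (1 : A)]
  have h5 : ‖algebraMap ℝ A c‖ ≤ c := by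
    rw [Algebra.algebraMap_eq_smul_one, norm_smul, Real.norm_eq_abs, abs_of_nonneg hc]
    calc c * ‖(1:A)‖ ≤ c * 1 := by gcongr
      _ = c := mul_one c
  rw [e]
  exact h4.trans h5

lemma E_pos_bound {A : Type*} [NormedRing A] [StarRing A] [CStarRing A]
    [NormedAlgebra ℂ A] [CompleteSpace A] [StarModule ℂ A] (Φ : A ≃⋆ₐ[ℂ] A) {E : A → A}
    (hE : ∀ a : A, Filter.Tendsto (fun n : ℕ => (n : ℂ)⁻¹ • ∑ k ∈ Finset.range n, (⇑Φ)^[k] a)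
      atTop (𝓝 (E a))) (y : A) :
    ‖((‖y‖ * ‖y‖ : ℝ) : ℂ) • (1 : A) - E (star y * y)‖ ≤ ‖y‖ * ‖y‖ := by
  set c : ℝ := ‖y‖ * ‖y‖ with hc
  set a : A := star y * y with ha
  have h1 : Filter.Tendsto
      (fun n : ℕ => (c : ℂ) • (1 : A) - (n : ℂ)⁻¹ • ∑ k ∈ Finset.range n, (⇑Φ)^[k] a)
      atTop (𝓝 ((c : ℂ) • (1 : A) - E a)) := tendsto_const_nhds.sub (hE a)
  refine le_of_tendsto h1.norm ?_
  filter_upwards [Filter.eventually_ge_atTop 1] with n hn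
  have hn0 : (n : ℂ) ≠ 0 := by exact_mod_cast Nat.one_le_iff_ne_zero.mp hn
  have hn0' : (n : ℝ) ≠ 0 := by exact_mod_cast Nat.one_le_iff_ne_zero.mp hn
  have hconst : (c : ℂ) • (1 : A)
      = (n : ℂ)⁻¹ • ∑ _k ∈ Finset.range n, (c : ℂ) • (1 : A) := by
    rw [Finset.sum_const, Finset.card_range, ← Nat.cast_smul_eq_nsmul ℂ n ((c:ℂ) • (1:A)),
      smul_smul, inv_mul_cancel₀ hn0, one_smul]
  have hsplit : (c : ℂ) • (1 : A) - (n : ℂ)⁻¹ • ∑ k ∈ Finset.range n, (⇑Φ)^[k] a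
      = (n : ℂ)⁻¹ • ∑ k ∈ Finset.range n, ((c : ℂ) • (1 : A) - (⇑Φ)^[k] a) := by
    rw [Finset.sum_sub_distrib, smul_sub, ← hconst]
  rw [hsplit, norm_smul]
  have hterm : ∀ k, ‖(c : ℂ) • (1 : A) - (⇑Φ)^[k] a‖ ≤ c := by
    intro k
    have : (⇑Φ)^[k] a = star ((⇑Φ)^[k] y) * ((⇑Φ)^[k] y) := by
      rw [ha, iter_mul, iter_star]
    rw [this]
    refine norm_sub_star_mul_self_le c _ ?_
    rw [iter_norm]
  have hsum : ‖∑ k ∈ Finset.range n, ((c : ℂ) • (1 : A) - (⇑Φ)^[k] a)‖ ≤ n * c := by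
    calc ‖∑ k ∈ Finset.range n, ((c : ℂ) • (1 : A) - (⇑Φ)^[k] a)‖
        ≤ ∑ k ∈ Finset.range n, ‖(c : ℂ) • (1 : A) - (⇑Φ)^[k] a‖ := norm_sum_le _ _
      _ ≤ ∑ _k ∈ Finset.range n, c := Finset.sum_le_sum fun k _ => hterm k
      _ = n * c := by rw [Finset.sum_const, Finset.card_range, nsmul_eq_mul]
  have hninv : ‖((n : ℂ))⁻¹‖ = (n : ℝ)⁻¹ := by simp
  rw [hninv]
  calc (n : ℝ)⁻¹ * ‖∑ k ∈ Finset.range n, ((c : ℂ) • (1 : A) - (⇑Φ)^[k] a)‖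
      ≤ (n : ℝ)⁻¹ * (n * c) := by
        gcongr
      _ = c := by field_simp

/-- If `(A, Φ)` is uniquely ergodic with respect to the fixed-point algebra, i.e. the
Cesàro averages `(1/n)Σ_{k<n}Φ^k(a)` converge in norm to `E a` for every `a`, then the
restriction map `ω ↦ ω∘ι` is an (affine) bijection from the `Φ`-invariant states of `A`
onto the states of `A^Φ`, with inverse `φ ↦ φ∘E`. -/
theorem stmt16 {A : Type*} [NormedRing A] [StarRing A] [CStarRing A] [NormedAlgebra ℂ A]
    [CompleteSpace A] [StarModule ℂ A]
    (Φ : A ≃⋆ₐ[ℂ] A) (E : A → A) (hfix : ∀ a, Φ (E a) = E a)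
    (hE : ∀ a : A, Tendsto (fun n : ℕ => (n : ℂ)⁻¹ • ∑ k ∈ Finset.range n, (⇑Φ)^[k] a)
      atTop (𝓝 (E a))) :
    Set.BijOn (fun (ω : A → ℂ) => ω ∘ (Subtype.val : fixedPts Φ → A))
        {ω : A → ℂ | IsState ω ∧ ∀ a, ω (Φ a) = ω a}
        {φ : fixedPts Φ → ℂ | IsState φ} ∧
      Set.InvOn (fun (φ : fixedPts Φ → ℂ) (a : A) => φ ⟨E a, hfix a⟩)
        (fun (ω : A → ℂ) => ω ∘ (Subtype.val : fixedPts Φ → A))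
        {ω : A → ℂ | IsState ω ∧ ∀ a, ω (Φ a) = ω a}
        {φ : fixedPts Φ → ℂ | IsState φ} := by
  classical
  have hmem : ∀ x : fixedPts Φ, Φ (x : A) = (x : A) := fun x => x.2
  have hiso : ∀ a : A, ‖Φ a‖ = ‖a‖ := by
    letI : CStarAlgebra A := ⟨⟩
    exact fun a => NonUnitalStarAlgHom.norm_map Φ Φ.injective a
  haveI hclosed : IsClosed ((fixedPts Φ : Set A)) := by
    have hcont : Continuous ⇑Φ := (AddMonoidHomClass.isometry_of_norm Φ hiso).continuous
    exact isClosed_eq hcont continuous_id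
  letI : CStarAlgebra A := ⟨⟩
  -- restriction maps invariant states to states of the fixed-point algebra
  have hMapsR : Set.MapsTo (fun (ω : A → ℂ) => ω ∘ (Subtype.val : fixedPts Φ → A))
      {ω : A → ℂ | IsState ω ∧ ∀ a, ω (Φ a) = ω a} {φ : fixedPts Φ → ℂ | IsState φ} := by
    rintro ω ⟨⟨hadd, hsmul, hone, hpos⟩, -⟩
    exact ⟨fun x y => hadd _ _, fun c x => hsmul _ _, hone, fun x => hpos _⟩
  -- φ ∘ E inverts restriction on invariant states
  have hLeft : Set.LeftInvOn (fun (φ : fixedPts Φ → ℂ) (a : A) => φ ⟨E a, hfix a⟩)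
      (fun (ω : A → ℂ) => ω ∘ (Subtype.val : fixedPts Φ → A))
      {ω : A → ℂ | IsState ω ∧ ∀ a, ω (Φ a) = ω a} := by
    rintro ω ⟨hst, hinv⟩
    funext a
    show ω (E a) = ω a
    have hiter : ∀ k, ω ((⇑Φ)^[k] a) = ω a := by
      intro k; induction k with
      | zero => rfl
      | succ n ih => rw [Function.iterate_succ_apply', hinv, ih]
    have h1 : Filter.Tendsto (fun n : ℕ => ω ((n:ℂ)⁻¹ • ∑ k ∈ Finset.range n, (⇑Φ)^[k] a))
        atTop (𝓝 (ω (E a))) := (hst.continuous.tendsto _).comp (hE a)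
    have h2 : (fun n : ℕ => ω ((n:ℂ)⁻¹ • ∑ k ∈ Finset.range n, (⇑Φ)^[k] a))
        =ᶠ[atTop] (fun _ => ω a) := by
      filter_upwards [Filter.eventually_ge_atTop 1] with n hn
      have hn0 : (n:ℂ) ≠ 0 := by exact_mod_cast Nat.one_le_iff_ne_zero.mp hn
      have e1 : ω ((n:ℂ)⁻¹ • ∑ k ∈ Finset.range n, (⇑Φ)^[k] a)
          = (n:ℂ)⁻¹ * ∑ k ∈ Finset.range n, ω ((⇑Φ)^[k] a) := by
        rw [hst.2.1]
        congr 1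
        exact map_sum hst.lin _ _
      rw [e1]
      simp only [hiter, Finset.sum_const, Finset.card_range, nsmul_eq_mul]
      rw [← mul_assoc, inv_mul_cancel₀ hn0, one_mul]
    exact tendsto_nhds_unique (Filter.Tendsto.congr' h2 h1) tendsto_const_nhds
  -- restriction inverts φ ∘ E on states of the fixed-point algebra
  have hRight : Set.RightInvOn (fun (φ : fixedPts Φ → ℂ) (a : A) => φ ⟨E a, hfix a⟩)
      (fun (ω : A → ℂ) => ω ∘ (Subtype.val : fixedPts Φ → A))
      {φ : fixedPts Φ → ℂ | IsState φ} := by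
    intro φ _
    funext x
    show φ ⟨E (x : A), hfix _⟩ = φ x
    exact congrArg φ (Subtype.ext (E_fixed Φ hE (hmem x)))
  -- φ ∘ E is an invariant state for every state φ of the fixed-point algebra
  have hMapsL : Set.MapsTo (fun (φ : fixedPts Φ → ℂ) (a : A) => φ ⟨E a, hfix a⟩)
      {φ : fixedPts Φ → ℂ | IsState φ} {ω : A → ℂ | IsState ω ∧ ∀ a, ω (Φ a) = ω a} := by
    intro φ hφ
    have hφ' : IsState φ := hφ
    refine ⟨⟨fun a b => ?_, fun c a => ?_, ?_, fun x => ?_⟩, fun a => ?_⟩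
    · have e : (⟨E (a + b), hfix _⟩ : fixedPts Φ) = ⟨E a, hfix _⟩ + ⟨E b, hfix _⟩ :=
        Subtype.ext (E_add Φ hE a b)
      show φ ⟨E (a + b), hfix _⟩ = φ ⟨E a, hfix _⟩ + φ ⟨E b, hfix _⟩
      rw [e, hφ'.1]
    · have e : (⟨E (c • a), hfix _⟩ : fixedPts Φ) = c • ⟨E a, hfix _⟩ :=
        Subtype.ext (E_smul Φ hE c a)
      show φ ⟨E (c • a), hfix _⟩ = c * φ ⟨E a, hfix _⟩
      rw [e, hφ'.2.1]
    · have e : (⟨E 1, hfix _⟩ : fixedPts Φ) = 1 := Subtype.ext (E_one Φ hE)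
      show φ ⟨E 1, hfix _⟩ = 1
      rw [e, hφ'.2.2.1]
    · -- positivity
      set c : ℝ := ‖x‖ * ‖x‖ with hc
      have hbound := E_pos_bound Φ hE x
      set u : fixedPts Φ := ⟨E (star x * x), hfix _⟩ with hu
      set w : fixedPts Φ := (c : ℂ) • 1 - u with hw
      have hwval : ((w : A)) = (c : ℂ) • (1 : A) - E (star x * x) := rfl
      have hwnorm : ‖w‖ ≤ c := by
        have hn : ‖w‖ = ‖(w : A)‖ := rfl
        rw [hn, hwval]; exact hbound
      have hsa : star (star x * x) = star x * x := by rw [star_mul, star_star]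
      have hustar : star u = u := by
        refine Subtype.ext ?_
        show star (E (star x * x)) = E (star x * x)
        rw [← E_star Φ hE, hsa]
      have hwstar : star w = w := by
        rw [hw, star_sub, star_smul, star_one, hustar]
        congr 1
        rw [Complex.star_def, Complex.conj_ofReal]
      have hwim : (φ w).im = 0 := by
        have h := hφ'.map_star w
        rw [hwstar] at h
        have h2 := congrArg Complex.im h
        simp only [Complex.conj_im] at h2
        linarith
      have hwre : (φ w).re ≤ c := by
        calc (φ w).re ≤ ‖φ w‖ := Complex.re_le_norm _
          _ ≤ ‖w‖ := hφ'.norm_le w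
          _ ≤ c := hwnorm
      have hdecomp : u = (c : ℂ) • 1 - w := by rw [hw]; exact (sub_sub_cancel _ _).symm
      have hval : φ u = (c : ℂ) - φ w := by
        rw [hdecomp]
        have h3 := map_sub hφ'.lin ((c : ℂ) • (1 : fixedPts Φ)) w
        simp only [IsState.lin_apply] at h3
        rw [h3, hφ'.2.1, hφ'.2.2.1, mul_one]
      show 0 ≤ (φ u).re ∧ (φ u).im = 0
      rw [hval]
      constructor
      · simp only [Complex.sub_re, Complex.ofReal_re]
        linarith
      · simp only [Complex.sub_im, Complex.ofReal_im, hwim]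
        ring
    · exact congrArg φ (Subtype.ext (E_phi Φ hE a))
  exact ⟨⟨hMapsR, hLeft.injOn, hRight.surjOn hMapsL⟩, hLeft, hRight⟩
end
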